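/- Let M be a nonzero subrectangular nonnegative real matrix. Then φ(M) = min over i, k ranging over the nonzero rows of M and j, l ranging over the nonzero columns of M of (M i j · M k l)/(M i l · M k j) is strictly positive, and the supremum, over all pairs of strictly positive vectors x, y, of d(xᵀM, yᵀM)/d(x, y) (with the convention 0/0 = 0) equals (1 − √φ(M))/(1 + √φ(M)), which is strictly less than 1. -/

import Mathlib

open Real Finset Topology Filter

/-- A nonnegative matrix is *subrectangular* if `M i j ≠ 0` and `M k l ≠ 0` imply
`M i l ≠ 0` and `M k j ≠ 0`. -/
def Subrectangular {m n : Type*} (M : Matrix m n ℝ) : Prop :=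
  ∀ i j k l, M i j ≠ 0 → M k l ≠ 0 → M i l ≠ 0 ∧ M k j ≠ 0

/-- The projective distance `d(x,y) = ln max_{j,l ∈ supp x} (x_j/y_j)/(x_l/y_l)`, with the
convention that `d = 0` when the support is empty (`sSup ∅ = 0` and `log 0 = 0`). -/
noncomputable def projDist {n : Type*} (x y : n → ℝ) : ℝ :=
  Real.log (sSup {r : ℝ | ∃ j, x j ≠ 0 ∧ ∃ l, x l ≠ 0 ∧ r = (x j / y j) / (x l / y l)})

/-- `φ(M)`: minimum of `(M i j · M k l)/(M i l · M k j)` over nonzero rows `i, k` and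
nonzero columns `j, l` of `M`. -/
noncomputable def phi {m n : Type*} (M : Matrix m n ℝ) : ℝ :=
  sInf {r : ℝ | ∃ i k j l,
    (∃ j', M i j' ≠ 0) ∧ (∃ j', M k j' ≠ 0) ∧ (∃ i', M i' j ≠ 0) ∧ (∃ i', M i' l ≠ 0) ∧
    r = (M i j * M k l) / (M i l * M k j)}

namespace Stmt7Aux

lemma div4 (A B C D : ℝ) (hB : B ≠ 0) (hC : C ≠ 0) (hD : D ≠ 0) :
    (A/B)/(C/D) = (A*D)/(B*C) := by
  field_simp

lemma calc_main (a p d : ℝ) (ha : 0 < a) (ha1 : a ≤ 1) (hp0 : 0 ≤ p) (hp1 : p ≤ 1) (hd : 1 ≤ d) :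
    (1 - p + d*p) * (1 - p + a^2*p) ≤ Real.exp ((1-a)/(1+a) * Real.log d) * (1 - p + d*(a^2*p)) := by
  have ha2 : (0:ℝ) < a^2 := by positivity
  have key1 : ∀ t : ℝ, 1 ≤ t → (0:ℝ) < 1 - p + t*p := by intro t ht; nlinarith
  have ha21 : a^2 ≤ 1 := by nlinarith
  have key2 : ∀ t : ℝ, 1 ≤ t → (0:ℝ) < 1 - p + t*(a^2*p) := by
    intro t ht
    nlinarith [mul_nonneg (sub_nonneg.2 ht) (mul_nonneg ha2.le hp0),
      mul_nonneg (sub_nonneg.2 hp1) (sub_nonneg.2 ha21)]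
  set τ : ℝ := (1-a)/(1+a) with hτ
  set h : ℝ → ℝ := fun t => τ * Real.log t - Real.log (1 - p + t*p) + Real.log (1 - p + t*(a^2*p))
    with hh
  have hderiv : ∀ t : ℝ, 1 ≤ t →
      HasDerivAt h (τ * t⁻¹ - p/(1-p+t*p) + (a^2*p)/(1-p+t*(a^2*p))) t := by
    intro t ht
    have h1 : HasDerivAt (fun s : ℝ => 1 - p + s*p) p t := by
      simpa using (hasDerivAt_mul_const p).const_add (1-p)
    have h2 : HasDerivAt (fun s : ℝ => 1 - p + s*(a^2*p)) (a^2*p) t := by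
      simpa using (hasDerivAt_mul_const (a^2*p)).const_add (1-p)
    have hl1 := h1.log (key1 t ht).ne'
    have hl2 := h2.log (key2 t ht).ne'
    have hlt := (Real.hasDerivAt_log (by linarith : t ≠ 0)).const_mul τ
    exact (hlt.sub hl1).add hl2
  have hmono : MonotoneOn h (Set.Icc 1 d) := by
    apply monotoneOn_of_deriv_nonneg (convex_Icc 1 d)
    · intro t ht
      exact (hderiv t ht.1).continuousAt.continuousWithinAt
    · intro t ht
      rw [interior_Icc] at ht
      exact (hderiv t ht.1.le).differentiableAt.differentiableWithinAt
    · intro t ht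
      rw [interior_Icc] at ht
      have ht1 : (1:ℝ) ≤ t := ht.1.le
      rw [(hderiv t ht1).deriv]
      have htpos : (0:ℝ) < t := by linarith
      have hd1 := key1 t ht1
      have hd2 := key2 t ht1
      have heq : τ * t⁻¹ - p/(1-p+t*p) + (a^2*p)/(1-p+t*(a^2*p)) =
          (τ * ((1-p+t*p)*(1-p+t*(a^2*p))) - t*p*(1-p)*(1-a^2)) /
            (t * ((1-p+t*p)*(1-p+t*(a^2*p)))) := by
        rw [← div_eq_mul_inv, div_sub_div _ _ htpos.ne' hd1.ne', div_add_div _ _ (by positivity) hd2.ne', div_eq_div_iff (by positivity) (by positivity)]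
        ring
      rw [heq]
      apply div_nonneg _ (by positivity)
      rw [sub_nonneg, hτ]
      rw [div_mul_eq_mul_div, le_div_iff₀ (by linarith : (0:ℝ) < 1+a)]
      nlinarith [mul_nonneg (by linarith : (0:ℝ) ≤ 1 - a)
        (sq_nonneg ((1-p) - a*(t*p))), sq_nonneg (1-p), sq_nonneg (t*p)]
  have hmem1 : (1:ℝ) ∈ Set.Icc (1:ℝ) d := ⟨le_rfl, hd⟩
  have hmemd : d ∈ Set.Icc (1:ℝ) d := ⟨hd, le_rfl⟩
  have h1d := hmono hmem1 hmemd hd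
  have e0 : h 1 = Real.log (1 - p + a^2*p) := by
    simp only [hh]
    norm_num
  have ed : h d = τ * Real.log d - Real.log (1-p+d*p) + Real.log (1-p+d*(a^2*p)) := rfl
  rw [e0, ed] at h1d
  have p1 : (0:ℝ) < 1 - p + d*p := key1 d hd
  have p2 : (0:ℝ) < 1 - p + a^2*p := by
    nlinarith [mul_nonneg (sub_nonneg.2 hp1) (sub_nonneg.2 ha21)]
  have p3 : (0:ℝ) < 1 - p + d*(a^2*p) := key2 d hd
  have e1 : (1 - p + d*p) * (1 - p + a^2*p)
      = Real.exp (Real.log (1-p+d*p) + Real.log (1-p+a^2*p)) := by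
    rw [Real.exp_add, Real.exp_log p1, Real.exp_log p2]
  have e2 : Real.exp (τ * Real.log d) * (1 - p + d*(a^2*p))
      = Real.exp (τ * Real.log d + Real.log (1-p+d*(a^2*p))) := by
    rw [Real.exp_add, Real.exp_log p3]
  rw [e1, e2]
  exact Real.exp_le_exp.2 (by linarith)

lemma scalar_homog (a d P1 P2 Q1 Q2 : ℝ) (ha : 0 < a) (ha1 : a ≤ 1) (hd : 1 ≤ d)
    (hP1 : 0 ≤ P1) (hP2 : 0 ≤ P2) (hQ1 : 0 ≤ Q1) (hQ2 : 0 ≤ Q2)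
    (hB : 0 < P1 + P2) (hC : 0 < Q1 + Q2) (hcross : a^2 * (P1 * Q2) ≤ P2 * Q1) :
    (P2 + d*P1) * (Q1 + Q2) ≤
      Real.exp ((1-a)/(1+a) * Real.log d) * ((Q2 + d*Q1) * (P1 + P2)) := by
  have ha2 : (0:ℝ) < a^2 := by positivity
  set K : ℝ := Real.exp ((1-a)/(1+a) * Real.log d) with hK
  have hKpos : 0 < K := Real.exp_pos _
  have hBne : P1 + P2 ≠ 0 := hB.ne'
  set p : ℝ := P1 / (P1 + P2) with hp
  have hp0 : 0 ≤ p := div_nonneg hP1 hB.le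
  have hp1 : p ≤ 1 := by rw [hp, div_le_one hB]; linarith
  have hcalc := calc_main a p d ha ha1 hp0 hp1 hd
  have hpB : p*(P1+P2) = P1 := by rw [hp]; field_simp
  have h1pB : (1-p)*(P1+P2) = P2 := by rw [hp]; field_simp; ring
  have key : (P2 + d*P1) * (P2 + a^2*P1) ≤ K * ((P2 + d*(a^2*P1)) * (P1+P2)) := by
    have hB2 : (0:ℝ) < (P1+P2)^2 := by positivity
    have c1 : (P2+d*P1)*(P2+a^2*P1) = ((1-p+d*p)*(1-p+a^2*p))*(P1+P2)^2 := by
      have : ((1-p+d*p)*(1-p+a^2*p))*(P1+P2)^2 =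
          ((1-p)*(P1+P2) + d*(p*(P1+P2))) * ((1-p)*(P1+P2) + a^2*(p*(P1+P2))) := by ring
      rw [this, hpB, h1pB]
    have c2 : (K*(1-p+d*(a^2*p)))*(P1+P2)^2 = K*((P2+d*(a^2*P1))*(P1+P2)) := by
      have : (K*(1-p+d*(a^2*p)))*(P1+P2)^2 =
          K*(((1-p)*(P1+P2) + d*(a^2*(p*(P1+P2))))*(P1+P2)) := by ring
      rw [this, hpB, h1pB]
    rw [c1, ← c2]
    exact mul_le_mul_of_nonneg_right hcalc hB2.le
  have middle : (P2 + d*(a^2*P1)) * (Q1+Q2) ≤ (Q2 + d*Q1) * (P2 + a^2*P1) := by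
    nlinarith [mul_nonneg (by linarith : (0:ℝ) ≤ d - 1)
      (by linarith : (0:ℝ) ≤ P2*Q1 - a^2*(P1*Q2))]
  have ha21 : a^2 ≤ 1 := by nlinarith
  have hpos2 : (0:ℝ) < P2 + a^2*P1 := by
    nlinarith [mul_pos ha2 hB, mul_nonneg (sub_nonneg.2 ha21) hP2]
  apply le_of_mul_le_mul_right _ hpos2
  have c3 := mul_le_mul_of_nonneg_right key hC.le
  have c4 := mul_le_mul_of_nonneg_left middle (by positivity : (0:ℝ) ≤ K * (P1+P2))
  nlinarith [c3, c4]

lemma main_ineq_aux (a d : ℝ) (ha : 0 < a) (ha1 : a ≤ 1) (hd : 1 ≤ d)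
    {m : Type*} [Fintype m] (b c : m → ℝ)
    (hb : ∀ i, 0 ≤ b i) (hc : ∀ i, 0 ≤ c i)
    (hB : 0 < ∑ i, b i) (hC : 0 < ∑ i, c i)
    (hcross : ∀ i k, a^2 * (b i * c k) ≤ b k * c i) :
    ∀ N : ℕ, ∀ u : m → ℝ, (∀ i, 1 ≤ u i) → (∀ i, u i ≤ d) →
      (Finset.univ.filter (fun i => u i ≠ 1 ∧ u i ≠ d)).card ≤ N →
      (∑ i, u i * b i) * (∑ i, c i) ≤
        Real.exp ((1-a)/(1+a) * Real.log d) * ((∑ i, u i * c i) * (∑ i, b i)) := by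
  classical
  intro N
  induction N with
  | zero =>
    intro u hu1 hud hcard
    have hfe : Finset.univ.filter (fun i => u i ≠ 1 ∧ u i ≠ d) = ∅ :=
      Finset.card_eq_zero.1 (Nat.le_zero.1 hcard)
    have hdich : ∀ i : m, u i = 1 ∨ u i = d := by
      intro i
      by_contra hcon
      push_neg at hcon
      have : i ∈ Finset.univ.filter (fun i => u i ≠ 1 ∧ u i ≠ d) := by
        simp [hcon.1, hcon.2]
      rw [hfe] at this
      exact absurd this (Finset.notMem_empty i)
    set S := Finset.univ.filter (fun i => u i = d) with hS
    set S' := Finset.univ.filter (fun i => ¬ u i = d) with hS'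
    have hsplit : ∀ v : m → ℝ, ∑ i, v i = (∑ i ∈ S, v i) + ∑ i ∈ S', v i := by
      intro v
      exact (Finset.sum_filter_add_sum_filter_not Finset.univ _ v).symm
    have huS : ∀ i ∈ S, u i = d := fun i hi => (Finset.mem_filter.1 hi).2
    have huS' : ∀ i ∈ S', u i = 1 := by
      intro i hi
      rcases hdich i with h | h
      · exact h
      · exact absurd h (Finset.mem_filter.1 hi).2
    have hub : ∑ i, u i * b i = d * (∑ i ∈ S, b i) + ∑ i ∈ S', b i := by
      rw [hsplit (fun i => u i * b i), Finset.mul_sum]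
      congr 1
      · exact Finset.sum_congr rfl (fun i hi => by rw [huS i hi])
      · exact Finset.sum_congr rfl (fun i hi => by rw [huS' i hi, one_mul])
    have huc : ∑ i, u i * c i = d * (∑ i ∈ S, c i) + ∑ i ∈ S', c i := by
      rw [hsplit (fun i => u i * c i), Finset.mul_sum]
      congr 1
      · exact Finset.sum_congr rfl (fun i hi => by rw [huS i hi])
      · exact Finset.sum_congr rfl (fun i hi => by rw [huS' i hi, one_mul])
    have hcr : a^2 * ((∑ i ∈ S, b i) * (∑ k ∈ S', c k)) ≤ (∑ i ∈ S', b i) * (∑ k ∈ S, c k) := by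
      have l1 : a^2 * ((∑ i ∈ S, b i) * (∑ k ∈ S', c k))
          = ∑ i ∈ S, ∑ k ∈ S', a^2 * (b i * c k) := by
        rw [Finset.sum_mul_sum, Finset.mul_sum]
        exact Finset.sum_congr rfl (fun i _ => by rw [Finset.mul_sum])
      have l2 : (∑ i ∈ S', b i) * (∑ k ∈ S, c k) = ∑ i ∈ S, ∑ k ∈ S', b k * c i := by
        rw [Finset.sum_comm (s := S)]
        rw [Finset.sum_mul_sum]
      rw [l1, l2]
      exact Finset.sum_le_sum (fun i _ => Finset.sum_le_sum (fun k _ => hcross i k))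
    have hBsum := hsplit b
    have hCsum := hsplit c
    have hsh := scalar_homog a d (∑ i ∈ S, b i) (∑ i ∈ S', b i)
      (∑ i ∈ S, c i) (∑ i ∈ S', c i) ha ha1 hd
      (Finset.sum_nonneg fun i _ => hb i) (Finset.sum_nonneg fun i _ => hb i)
      (Finset.sum_nonneg fun i _ => hc i) (Finset.sum_nonneg fun i _ => hc i)
      (by rw [← hBsum]; exact hB) (by rw [← hCsum]; exact hC) hcr
    rw [hub, huc, hBsum, hCsum]
    linarith [hsh]
  | succ N ih =>
    intro u hu1 hud hcard
    by_cases hle : (Finset.univ.filter (fun i => u i ≠ 1 ∧ u i ≠ d)).card ≤ N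
    · exact ih u hu1 hud hle
    · have hne : (Finset.univ.filter (fun i => u i ≠ 1 ∧ u i ≠ d)).Nonempty := by
        rw [← Finset.card_pos]; omega
      obtain ⟨i0, hi0mem⟩ := hne
      have hi0 : u i0 ≠ 1 ∧ u i0 ≠ d := (Finset.mem_filter.1 hi0mem).2
      set Ab := ∑ i ∈ Finset.univ.erase i0, u i * b i with hAb
      set Ac := ∑ i ∈ Finset.univ.erase i0, u i * c i with hAc
      set t' : ℝ := if Ab * c i0 ≤ Ac * b i0 then d else 1 with ht'
      set u' := Function.update u i0 t' with hu'
      have ht'1 : 1 ≤ t' := by rw [ht']; split_ifs <;> [exact hd; exact le_rfl]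
      have ht'd : t' ≤ d := by rw [ht']; split_ifs <;> [exact le_rfl; exact hd]
      have hsum : ∀ v : m → ℝ, ∑ i, u' i * v i
          = t' * v i0 + ∑ i ∈ Finset.univ.erase i0, u i * v i := by
        intro v
        rw [← Finset.add_sum_erase _ (fun i => u' i * v i) (Finset.mem_univ i0)]
        congr 1
        · rw [hu', Function.update_self]
        · exact Finset.sum_congr rfl (fun i hi => by
            rw [hu', Function.update_of_ne (Finset.mem_erase.1 hi).1])
      have hsumu : ∀ v : m → ℝ, ∑ i, u i * v i
          = u i0 * v i0 + ∑ i ∈ Finset.univ.erase i0, u i * v i := by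
        intro v
        rw [← Finset.add_sum_erase _ (fun i => u i * v i) (Finset.mem_univ i0)]
      have hAbnn : 0 ≤ Ab := Finset.sum_nonneg fun i _ =>
        mul_nonneg (by linarith [hu1 i]) (hb i)
      have hAcnn : 0 ≤ Ac := Finset.sum_nonneg fun i _ =>
        mul_nonneg (by linarith [hu1 i]) (hc i)
      have mob : (∑ i, u i * b i) * (∑ i, u' i * c i)
          ≤ (∑ i, u' i * b i) * (∑ i, u i * c i) := by
        rw [hsum b, hsum c, hsumu b, hsumu c]
        have h1 := hu1 i0
        have h2 := hud i0
        have hbnn := hb i0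
        have hcnn := hc i0
        rw [ht']
        split_ifs with hcase
        · nlinarith [mul_nonneg (sub_nonneg.2 h2) (sub_nonneg.2 hcase)]
        · push_neg at hcase
          nlinarith [mul_nonneg (sub_nonneg.2 h1) (sub_nonneg.2 hcase.le)]
      have hsub : Finset.univ.filter (fun i => u' i ≠ 1 ∧ u' i ≠ d)
          ⊆ (Finset.univ.filter (fun i => u i ≠ 1 ∧ u i ≠ d)).erase i0 := by
        intro i hi
        have hi2 := (Finset.mem_filter.1 hi).2
        have hii0 : i ≠ i0 := by
          rintro rfl
          rw [hu', Function.update_self] at hi2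
          rw [ht'] at hi2
          split_ifs at hi2 with h
          · exact hi2.2 rfl
          · exact hi2.1 rfl
        rw [Finset.mem_erase]
        refine ⟨hii0, Finset.mem_filter.2 ⟨Finset.mem_univ i, ?_⟩⟩
        rwa [hu', Function.update_of_ne hii0] at hi2
      have hcard' : (Finset.univ.filter (fun i => u' i ≠ 1 ∧ u' i ≠ d)).card ≤ N := by
        have h1 := Finset.card_le_card hsub
        rw [Finset.card_erase_of_mem hi0mem] at h1
        omega
      have hu'1 : ∀ i, 1 ≤ u' i := by
        intro i
        rw [hu']
        rcases eq_or_ne i i0 with rfl | h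
        · rw [Function.update_self]; exact ht'1
        · rw [Function.update_of_ne h]; exact hu1 i
      have hu'd : ∀ i, u' i ≤ d := by
        intro i
        rw [hu']
        rcases eq_or_ne i i0 with rfl | h
        · rw [Function.update_self]; exact ht'd
        · rw [Function.update_of_ne h]; exact hud i
      have hIH := ih u' hu'1 hu'd hcard'
      have hErc : 0 < ∑ i, u' i * c i := by
        have : ∑ i, c i ≤ ∑ i, u' i * c i :=
          Finset.sum_le_sum (fun i _ => le_mul_of_one_le_left (hc i) (hu'1 i))
        linarith
      have hEuc : 0 ≤ ∑ i, u i * c i :=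
        Finset.sum_nonneg fun i _ => mul_nonneg (by linarith [hu1 i]) (hc i)
      apply le_of_mul_le_mul_right _ hErc
      have c3 := mul_le_mul_of_nonneg_right mob hC.le
      have c4 := mul_le_mul_of_nonneg_right hIH hEuc
      nlinarith [c3, c4]

lemma setS_finite {m : Type*} [Fintype m] (x y : m → ℝ) :
    {r : ℝ | ∃ j, x j ≠ 0 ∧ ∃ l, x l ≠ 0 ∧ r = (x j / y j) / (x l / y l)}.Finite := by
  apply Set.Finite.subset (Set.finite_range
    (fun p : m × m => (x p.1 / y p.1) / (x p.2 / y p.2)))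
  rintro r ⟨j, _, l, _, rfl⟩
  exact ⟨(j, l), rfl⟩

lemma projDist_eq {m : Type*} [Fintype m] (x y : m → ℝ)
    (hx : ∀ i, 0 < x i) (hy : ∀ i, 0 < y i) (jm lm : m)
    (hmax : ∀ i, x i / y i ≤ x jm / y jm) (hmin : ∀ i, x lm / y lm ≤ x i / y i) :
    projDist x y = Real.log ((x jm / y jm) / (x lm / y lm)) := by
  unfold projDist
  congr 1
  apply IsGreatest.csSup_eq
  constructor
  · exact ⟨jm, (hx jm).ne', lm, (hx lm).ne', rfl⟩
  · rintro r ⟨j, _, l, _, rfl⟩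
    exact div_le_div₀ (le_of_lt (div_pos (hx jm) (hy jm))) (hmax j)
      (div_pos (hx lm) (hy lm)) (hmin l)

end Stmt7Aux

open Stmt7Aux in
set_option maxHeartbeats 1000000 in
theorem stmt_7 {m n : Type*} [Fintype m] [Fintype n]
    (M : Matrix m n ℝ) (hpos : ∀ i j, 0 ≤ M i j)
    (hsr : Subrectangular M) (hne : M ≠ 0) :
    0 < phi M ∧
    sSup {r : ℝ | ∃ x y : m → ℝ, (∀ i, 0 < x i) ∧ (∀ i, 0 < y i) ∧
        r = projDist (Matrix.vecMul x M) (Matrix.vecMul y M) / projDist x y} =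
      (1 - Real.sqrt (phi M)) / (1 + Real.sqrt (phi M)) ∧
    (1 - Real.sqrt (phi M)) / (1 + Real.sqrt (phi M)) < 1 := by
  classical
  obtain ⟨i₁, j₁, hij₁⟩ : ∃ i j, M i j ≠ 0 := by
    by_contra hcon
    push_neg at hcon
    exact hne (by ext i j; simpa using hcon i j)
  haveI : Nonempty m := ⟨i₁⟩
  haveI : Nonempty n := ⟨j₁⟩
  set Φ : Set ℝ := {r : ℝ | ∃ i k j l,
    (∃ j', M i j' ≠ 0) ∧ (∃ j', M k j' ≠ 0) ∧ (∃ i', M i' j ≠ 0) ∧ (∃ i', M i' l ≠ 0) ∧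
    r = (M i j * M k l) / (M i l * M k j)} with hΦdef
  have hphidef : phi M = sInf Φ := rfl
  have hΦfin : Φ.Finite := by
    apply Set.Finite.subset (Set.finite_range
      (fun p : (m × m) × (n × n) =>
        (M p.1.1 p.2.1 * M p.1.2 p.2.2) / (M p.1.1 p.2.2 * M p.1.2 p.2.1)))
    rintro r ⟨i, k, j, l, -, -, -, -, rfl⟩
    exact ⟨((i,k),(j,l)), rfl⟩
  have h1Φ : (1:ℝ) ∈ Φ := ⟨i₁, i₁, j₁, j₁, ⟨j₁, hij₁⟩, ⟨j₁, hij₁⟩, ⟨i₁, hij₁⟩, ⟨i₁, hij₁⟩,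
    (div_self (mul_ne_zero hij₁ hij₁)).symm⟩
  have hΦne : Φ.Nonempty := ⟨1, h1Φ⟩
  have hMpos : ∀ i j, M i j ≠ 0 → 0 < M i j := fun i j h => (hpos i j).lt_of_ne (Ne.symm h)
  have hΦpos : ∀ r ∈ Φ, 0 < r := by
    rintro r ⟨i, k, j, l, ⟨j', hj'⟩, ⟨j'', hj''⟩, ⟨i', hi'⟩, ⟨i'', hi''⟩, rfl⟩
    have e1 : M i j ≠ 0 := (hsr i j' i' j hj' hi').1
    have e2 : M k l ≠ 0 := (hsr k j'' i'' l hj'' hi'').1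
    have e3 : M i l ≠ 0 := (hsr i j' i'' l hj' hi'').1
    have e4 : M k j ≠ 0 := (hsr k j'' i' j hj'' hi').1
    exact div_pos (mul_pos (hMpos _ _ e1) (hMpos _ _ e2))
      (mul_pos (hMpos _ _ e3) (hMpos _ _ e4))
  have hΦbdd : BddBelow Φ := hΦfin.bddBelow
  have hφpos : 0 < phi M := by
    rw [hphidef]; exact hΦpos _ (hΦne.csInf_mem hΦfin)
  have hφle1 : phi M ≤ 1 := by rw [hphidef]; exact csInf_le hΦbdd h1Φ
  set a : ℝ := Real.sqrt (phi M) with hadef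
  have ha : 0 < a := Real.sqrt_pos.2 hφpos
  have ha1 : a ≤ 1 := Real.sqrt_le_one.2 hφle1
  have ha2 : a^2 = phi M := Real.sq_sqrt hφpos.le
  set τ : ℝ := (1 - a) / (1 + a) with hτdef
  have hτnn : 0 ≤ τ := div_nonneg (by linarith) (by linarith)
  have hτlt1 : τ < 1 := (div_lt_one (by linarith)).2 (by linarith)
  refine ⟨hφpos, ?_, hτlt1⟩
  have hcrossM : ∀ j l, (∃ i', M i' j ≠ 0) → (∃ i', M i' l ≠ 0) →
      ∀ i k, phi M * (M i j * M k l) ≤ M i l * M k j := by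
    intro j l hcj hcl i k
    by_cases hij : M i j = 0
    · rw [hij]
      simpa using mul_nonneg (hpos i l) (hpos k j)
    · by_cases hkl : M k l = 0
      · rw [hkl]
        simpa using mul_nonneg (hpos i l) (hpos k j)
      · have hmem : (M i l * M k j) / (M i j * M k l) ∈ Φ :=
          ⟨i, k, l, j, ⟨j, hij⟩, ⟨l, hkl⟩, hcl, hcj, rfl⟩
        have hle := csInf_le hΦbdd hmem
        have hdp : 0 < M i j * M k l := mul_pos (hMpos _ _ hij) (hMpos _ _ hkl)
        rw [hphidef]
        calc sInf Φ * (M i j * M k l)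
            ≤ ((M i l * M k j)/(M i j * M k l)) * (M i j * M k l) :=
              mul_le_mul_of_nonneg_right hle hdp.le
          _ = M i l * M k j := div_mul_cancel₀ _ hdp.ne'
  have hvm : ∀ (x : m → ℝ) (j : n), Matrix.vecMul x M j = ∑ i, x i * M i j := fun x j => rfl
  have hvmpos : ∀ (x : m → ℝ), (∀ i, 0 < x i) → ∀ j, (∃ i', M i' j ≠ 0) →
      0 < Matrix.vecMul x M j := by
    rintro x hx j ⟨i', hi'⟩
    rw [hvm]
    exact Finset.sum_pos' (fun i _ => mul_nonneg (hx i).le (hpos i j))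
      ⟨i', Finset.mem_univ i', mul_pos (hx i') (hMpos _ _ hi')⟩
  have hvmJ : ∀ (x : m → ℝ) (j : n), Matrix.vecMul x M j ≠ 0 → ∃ i', M i' j ≠ 0 := by
    intro x j h
    by_contra hcon
    push_neg at hcon
    exact h (by rw [hvm]; exact Finset.sum_eq_zero (fun i _ => by rw [hcon i, mul_zero]))
  set R : Set ℝ := {r : ℝ | ∃ x y : m → ℝ, (∀ i, 0 < x i) ∧ (∀ i, 0 < y i) ∧
      r = projDist (Matrix.vecMul x M) (Matrix.vecMul y M) / projDist x y} with hRdef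
  have hpd11 : projDist (fun _ : m => (1:ℝ)) (fun _ : m => (1:ℝ)) = 0 := by
    rw [projDist_eq (fun _ => 1) (fun _ => 1) (fun _ => one_pos) (fun _ => one_pos)
      (Classical.arbitrary m) (Classical.arbitrary m) (fun i => le_rfl) (fun i => le_rfl)]
    norm_num
  have h0R : (0:ℝ) ∈ R :=
    ⟨(fun _ => 1), (fun _ => 1), fun _ => one_pos, fun _ => one_pos,
      by rw [hpd11, div_zero]⟩
  -- upper bound
  have hub : ∀ r ∈ R, r ≤ τ := by
    rintro r ⟨x, y, hx, hy, rfl⟩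
    by_cases hden : projDist x y = 0
    · rw [hden, div_zero]; exact hτnn
    obtain ⟨jm, -, hmax'⟩ := Finset.exists_max_image Finset.univ (fun i => x i / y i)
      Finset.univ_nonempty
    obtain ⟨lm, -, hmin'⟩ := Finset.exists_min_image Finset.univ (fun i => x i / y i)
      Finset.univ_nonempty
    have hmax : ∀ i, x i / y i ≤ x jm / y jm := fun i => hmax' i (Finset.mem_univ i)
    have hmin : ∀ i, x lm / y lm ≤ x i / y i := fun i => hmin' i (Finset.mem_univ i)
    have hpdxy := projDist_eq x y hx hy jm lm hmax hmin
    set c0 : ℝ := x lm / y lm with hc0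
    have hc0pos : 0 < c0 := div_pos (hx lm) (hy lm)
    set δ : ℝ := (x jm / y jm) / c0 with hδdef
    have hδ1 : 1 ≤ δ := (one_le_div hc0pos).2 (hmin jm)
    have hlogδnn : 0 ≤ Real.log δ := Real.log_nonneg hδ1
    have hlogδpos : 0 < Real.log δ :=
      hlogδnn.lt_of_ne (fun h => hden (by rw [hpdxy, ← h]))
    rw [hpdxy, div_le_iff₀ hlogδpos]
    set K : ℝ := Real.exp (τ * Real.log δ) with hKdef
    set S' : Set ℝ := {r : ℝ | ∃ j, Matrix.vecMul x M j ≠ 0 ∧ ∃ l, Matrix.vecMul x M l ≠ 0 ∧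
        r = (Matrix.vecMul x M j / Matrix.vecMul y M j) /
          (Matrix.vecMul x M l / Matrix.vecMul y M l)} with hS'def
    have hS'fin : S'.Finite := setS_finite _ _
    have hxMj₁ : Matrix.vecMul x M j₁ ≠ 0 := (hvmpos x hx j₁ ⟨i₁, hij₁⟩).ne'
    have hyMj₁ : Matrix.vecMul y M j₁ ≠ 0 := (hvmpos y hy j₁ ⟨i₁, hij₁⟩).ne'
    have h1S' : (1:ℝ) ∈ S' :=
      ⟨j₁, hxMj₁, j₁, hxMj₁, (div_self (div_ne_zero hxMj₁ hyMj₁)).symm⟩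
    have hS'ub : ∀ r' ∈ S', r' ≤ K := by
      rintro r' ⟨j, hj, l, hl, rfl⟩
      obtain ⟨ij, hijc⟩ := hvmJ x j hj
      obtain ⟨il, hilc⟩ := hvmJ x l hl
      have hxMj := hvmpos x hx j ⟨ij, hijc⟩
      have hxMl := hvmpos x hx l ⟨il, hilc⟩
      have hyMj := hvmpos y hy j ⟨ij, hijc⟩
      have hyMl := hvmpos y hy l ⟨il, hilc⟩
      rw [div4 _ _ _ _ hyMj.ne' hxMl.ne' hyMl.ne', div_le_iff₀ (mul_pos hyMj hxMl)]
      -- main inequality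
      have hu1 : ∀ i, 1 ≤ (x i / y i) / c0 := fun i => (one_le_div hc0pos).2 (hmin i)
      have hud : ∀ i, (x i / y i) / c0 ≤ δ := fun i => by
        rw [hδdef]
        exact (div_le_div_iff_of_pos_right hc0pos).2 (hmax i)
      have hBpos : 0 < ∑ i, y i * M i j := by rw [← hvm y j]; exact hyMj
      have hCpos : 0 < ∑ i, y i * M i l := by rw [← hvm y l]; exact hyMl
      have hcross' : ∀ i k, a^2 * ((y i * M i j) * (y k * M k l))
          ≤ (y k * M k j) * (y i * M i l) := by
        intro i k
        have h1 := hcrossM j l ⟨ij, hijc⟩ ⟨il, hilc⟩ i k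
        have h2 : 0 ≤ y i * y k := mul_nonneg (hy i).le (hy k).le
        calc a^2 * ((y i * M i j) * (y k * M k l))
            = (phi M * (M i j * M k l)) * (y i * y k) := by rw [ha2]; ring
          _ ≤ (M i l * M k j) * (y i * y k) := mul_le_mul_of_nonneg_right h1 h2
          _ = (y k * M k j) * (y i * M i l) := by ring
      have hmain := main_ineq_aux a δ ha ha1 hδ1 (fun i => y i * M i j) (fun i => y i * M i l)
        (fun i => mul_nonneg (hy i).le (hpos i j)) (fun i => mul_nonneg (hy i).le (hpos i l))
        hBpos hCpos hcross'
        ((Finset.univ.filter (fun i => (x i / y i) / c0 ≠ 1 ∧ (x i / y i) / c0 ≠ δ)).card)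
        (fun i => (x i / y i) / c0) hu1 hud le_rfl
      have hsb : ∑ i, ((x i / y i) / c0) * (y i * M i j) = Matrix.vecMul x M j / c0 := by
        rw [hvm x j, Finset.sum_div]
        refine Finset.sum_congr rfl (fun i _ => ?_)
        have := (hy i).ne'
        field_simp
      have hsc : ∑ i, ((x i / y i) / c0) * (y i * M i l) = Matrix.vecMul x M l / c0 := by
        rw [hvm x l, Finset.sum_div]
        refine Finset.sum_congr rfl (fun i _ => ?_)
        have := (hy i).ne'
        field_simp
      rw [hsb, hsc, ← hvm y j, ← hvm y l, ← hτdef, ← hKdef] at hmain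
      -- hmain : (xMj/c0) * yMl ≤ K * ((xMl/c0) * yMj)
      have e1 : (Matrix.vecMul x M j * Matrix.vecMul y M l)/c0
          = (Matrix.vecMul x M j / c0) * Matrix.vecMul y M l := by ring
      have e2 : (K * (Matrix.vecMul y M j * Matrix.vecMul x M l))/c0
          = K * ((Matrix.vecMul x M l / c0) * Matrix.vecMul y M j) := by ring
      exact (div_le_div_iff_of_pos_right hc0pos).1 (by rw [e1, e2]; exact hmain)
    have hsup_le : sSup S' ≤ K := csSup_le ⟨1, h1S'⟩ hS'ub
    have hsup_ge1 : (1:ℝ) ≤ sSup S' := le_csSup hS'fin.bddAbove h1S'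
    calc projDist (Matrix.vecMul x M) (Matrix.vecMul y M) = Real.log (sSup S') := rfl
      _ ≤ Real.log K := Real.log_le_log (by linarith) hsup_le
      _ = τ * Real.log δ := by rw [hKdef, Real.log_exp]
  have hRbdd : BddAbove R := ⟨τ, hub⟩
  -- lower bound
  have hlow : τ ≤ sSup R := by
    rcases eq_or_lt_of_le ha1 with haeq | halt
    · have hτ0 : τ = 0 := by rw [hτdef, ← haeq]; norm_num
      rw [hτ0]
      exact le_csSup hRbdd h0R
    · obtain ⟨i0, k0, j0, l0, ⟨j0', hrow_i0⟩, ⟨k0', hrow_k0⟩, ⟨i0', hcol_j0⟩, ⟨k0'', hcol_l0⟩,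
        hφeq⟩ := hΦne.csInf_mem hΦfin
      have e_ij : M i0 j0 ≠ 0 := (hsr i0 j0' i0' j0 hrow_i0 hcol_j0).1
      have e_kl : M k0 l0 ≠ 0 := (hsr k0 k0' k0'' l0 hrow_k0 hcol_l0).1
      have e_il : M i0 l0 ≠ 0 := (hsr i0 j0' k0'' l0 hrow_i0 hcol_l0).1
      have e_kj : M k0 j0 ≠ 0 := (hsr k0 k0' i0' j0 hrow_k0 hcol_j0).1
      have p_ij := hMpos _ _ e_ij
      have p_kl := hMpos _ _ e_kl
      have p_il := hMpos _ _ e_il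
      have p_kj := hMpos _ _ e_kj
      have hφeq' : phi M = (M i0 j0 * M k0 l0) / (M i0 l0 * M k0 j0) := by
        rw [hphidef]; exact hφeq
      have hφprod : a^2 * (M i0 l0 * M k0 j0) = M i0 j0 * M k0 l0 := by
        rw [ha2, hφeq']
        field_simp
      have hi0k0 : i0 ≠ k0 := by
        rintro rfl
        have h1 : phi M = 1 := by
          rw [hφeq', mul_comm (M i0 l0) (M i0 j0)]
          exact div_self (mul_ne_zero e_ij e_il)
        nlinarith [ha2]
      have hkey : ∀ d : ℝ, 1 < d →
          Real.log ((d + a)/(1 + d*a)) / Real.log d ≤ sSup R := by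
        intro d hd
        have hd0 : 0 < d := by linarith
        have hlogd : 0 < Real.log d := Real.log_pos hd
        set A1 : ℝ := M k0 l0 with hA1
        set A2 : ℝ := a * M i0 l0 with hA2
        have hA1p : 0 < A1 := p_kl
        have hA2p : 0 < A2 := mul_pos ha p_il
        set E : Finset m := (Finset.univ.erase i0).erase k0 with hE
        set T : n → ℝ := fun j => ∑ i ∈ E, M i j with hT
        have hTnn : ∀ j, 0 ≤ T j := fun j => Finset.sum_nonneg fun i _ => hpos i j
        set xv : ℝ → m → ℝ := fun ε i => if i = i0 then d*A1 else if i = k0 then A2 else ε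
          with hxv
        set yv : ℝ → m → ℝ := fun ε i => if i = i0 then A1 else if i = k0 then A2 else ε
          with hyv
        have hxvpos : ∀ ε : ℝ, 0 < ε → ∀ i, 0 < xv ε i := by
          intro ε hε i
          simp only [hxv]
          split_ifs
          · positivity
          · exact hA2p
          · exact hε
        have hyvpos : ∀ ε : ℝ, 0 < ε → ∀ i, 0 < yv ε i := by
          intro ε hε i
          simp only [hyv]
          split_ifs
          · exact hA1p
          · exact hA2p
          · exact hε
        have hsum3 : ∀ (w : m → ℝ), ∑ i, w i = w i0 + w k0 + ∑ i ∈ E, w i := by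
          intro w
          rw [← Finset.add_sum_erase _ w (Finset.mem_univ i0),
            ← Finset.add_sum_erase _ w (Finset.mem_erase.2 ⟨hi0k0.symm, Finset.mem_univ k0⟩),
            ← hE, add_assoc]
        have hxM : ∀ (ε : ℝ) (j : n),
            Matrix.vecMul (xv ε) M j = d*A1*M i0 j + A2*M k0 j + ε*T j := by
          intro ε j
          rw [hvm, hsum3 (fun i => xv ε i * M i j)]
          have h1 : xv ε i0 = d*A1 := by simp [hxv]
          have h2 : xv ε k0 = A2 := by simp [hxv, hi0k0.symm]
          have h3 : ∑ i ∈ E, xv ε i * M i j = ε * T j := by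
            rw [hT, Finset.mul_sum]
            refine Finset.sum_congr rfl (fun i hi => ?_)
            have hi1 : i ≠ k0 := (Finset.mem_erase.1 hi).1
            have hi2 : i ≠ i0 := (Finset.mem_erase.1 (Finset.mem_erase.1 hi).2).1
            simp [hxv, hi1, hi2]
          rw [h1, h2, h3]
        have hyM : ∀ (ε : ℝ) (j : n),
            Matrix.vecMul (yv ε) M j = A1*M i0 j + A2*M k0 j + ε*T j := by
          intro ε j
          rw [hvm, hsum3 (fun i => yv ε i * M i j)]
          have h1 : yv ε i0 = A1 := by simp [hyv]
          have h2 : yv ε k0 = A2 := by simp [hyv, hi0k0.symm]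
          have h3 : ∑ i ∈ E, yv ε i * M i j = ε * T j := by
            rw [hT, Finset.mul_sum]
            refine Finset.sum_congr rfl (fun i hi => ?_)
            have hi1 : i ≠ k0 := (Finset.mem_erase.1 hi).1
            have hi2 : i ≠ i0 := (Finset.mem_erase.1 (Finset.mem_erase.1 hi).2).1
            simp [hyv, hi1, hi2]
          rw [h1, h2, h3]
        set Cf : ℝ → ℝ := fun ε =>
          ((d*A1*M i0 l0 + A2*M k0 l0 + ε*T l0) * (A1*M i0 j0 + A2*M k0 j0 + ε*T j0)) /
          ((A1*M i0 l0 + A2*M k0 l0 + ε*T l0) * (d*A1*M i0 j0 + A2*M k0 j0 + ε*T j0)) with hCf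
        have hnum1 : ∀ ε : ℝ, 0 ≤ ε → 0 < d*A1*M i0 l0 + A2*M k0 l0 + ε*T l0 := by
          intro ε hε
          linarith [mul_nonneg hε (hTnn l0), mul_pos (mul_pos hd0 hA1p) p_il,
            mul_pos hA2p p_kl]
        have hnum2 : ∀ ε : ℝ, 0 ≤ ε → 0 < A1*M i0 j0 + A2*M k0 j0 + ε*T j0 := by
          intro ε hε
          linarith [mul_nonneg hε (hTnn j0), mul_pos hA1p p_ij, mul_pos hA2p p_kj]
        have hden1 : ∀ ε : ℝ, 0 ≤ ε → 0 < A1*M i0 l0 + A2*M k0 l0 + ε*T l0 := by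
          intro ε hε
          linarith [mul_nonneg hε (hTnn l0), mul_pos hA1p p_il, mul_pos hA2p p_kl]
        have hden2 : ∀ ε : ℝ, 0 ≤ ε → 0 < d*A1*M i0 j0 + A2*M k0 j0 + ε*T j0 := by
          intro ε hε
          linarith [mul_nonneg hε (hTnn j0), mul_pos (mul_pos hd0 hA1p) p_ij,
            mul_pos hA2p p_kj]
        have hCfpos : ∀ ε : ℝ, 0 ≤ ε → 0 < Cf ε := fun ε hε =>
          div_pos (mul_pos (hnum1 ε hε) (hnum2 ε hε)) (mul_pos (hden1 ε hε) (hden2 ε hε))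
        have hεbound : ∀ ε : ℝ, 0 < ε → Real.log (Cf ε) / Real.log d ≤ sSup R := by
          intro ε hε
          have hxp := hxvpos ε hε
          have hyp := hyvpos ε hε
          have hri0 : xv ε i0 / yv ε i0 = d := by
            simp only [hxv, hyv, if_pos rfl]
            field_simp
          have hrk0 : xv ε k0 / yv ε k0 = 1 := by
            simp only [hxv, hyv, if_neg hi0k0.symm, if_pos rfl]
            field_simp
          have hrother : ∀ i, i ≠ i0 → i ≠ k0 → xv ε i / yv ε i = 1 := by
            intro i h1 h2
            simp only [hxv, hyv, if_neg h1, if_neg h2]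
            field_simp
          have hratle : ∀ i, xv ε i / yv ε i ≤ xv ε i0 / yv ε i0 := by
            intro i
            rw [hri0]
            rcases eq_or_ne i i0 with rfl | h1
            · rw [hri0]
            · rcases eq_or_ne i k0 with rfl | h2
              · rw [hrk0]; linarith
              · rw [hrother i h1 h2]; linarith
          have hratge : ∀ i, xv ε k0 / yv ε k0 ≤ xv ε i / yv ε i := by
            intro i
            rw [hrk0]
            rcases eq_or_ne i i0 with rfl | h1
            · rw [hri0]; linarith
            · rcases eq_or_ne i k0 with rfl | h2
              · rw [hrk0]
              · rw [hrother i h1 h2]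
          have hpdd : projDist (xv ε) (yv ε) = Real.log d := by
            rw [projDist_eq (xv ε) (yv ε) hxp hyp i0 k0 hratle hratge, hri0, hrk0, div_one]
          have hmemR : projDist (Matrix.vecMul (xv ε) M) (Matrix.vecMul (yv ε) M) /
              projDist (xv ε) (yv ε) ∈ R := ⟨xv ε, yv ε, hxp, hyp, rfl⟩
          have hle1 := le_csSup hRbdd hmemR
          rw [hpdd] at hle1
          have hxMl0 : Matrix.vecMul (xv ε) M l0 ≠ 0 :=
            (hvmpos _ hxp l0 ⟨k0'', hcol_l0⟩).ne'
          have hxMj0 : Matrix.vecMul (xv ε) M j0 ≠ 0 :=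
            (hvmpos _ hxp j0 ⟨i0', hcol_j0⟩).ne'
          have hyMl0 : Matrix.vecMul (yv ε) M l0 ≠ 0 :=
            (hvmpos _ hyp l0 ⟨k0'', hcol_l0⟩).ne'
          have hyMj0 : Matrix.vecMul (yv ε) M j0 ≠ 0 :=
            (hvmpos _ hyp j0 ⟨i0', hcol_j0⟩).ne'
          have hCfel : (Matrix.vecMul (xv ε) M l0 / Matrix.vecMul (yv ε) M l0) /
              (Matrix.vecMul (xv ε) M j0 / Matrix.vecMul (yv ε) M j0) = Cf ε := by
            rw [div4 _ _ _ _ hyMl0 hxMj0 hyMj0, hCf, hxM ε l0, hxM ε j0, hyM ε l0, hyM ε j0]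
          have hmemS : Cf ε ∈ {r : ℝ | ∃ j, Matrix.vecMul (xv ε) M j ≠ 0 ∧
              ∃ l, Matrix.vecMul (xv ε) M l ≠ 0 ∧
              r = (Matrix.vecMul (xv ε) M j / Matrix.vecMul (yv ε) M j) /
                (Matrix.vecMul (xv ε) M l / Matrix.vecMul (yv ε) M l)} :=
            ⟨l0, hxMl0, j0, hxMj0, hCfel.symm⟩
          have hsup' : Real.log (Cf ε) ≤
              projDist (Matrix.vecMul (xv ε) M) (Matrix.vecMul (yv ε) M) := by
            have h1 : Cf ε ≤ sSup _ := le_csSup (setS_finite (Matrix.vecMul (xv ε) M)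
              (Matrix.vecMul (yv ε) M)).bddAbove hmemS
            calc Real.log (Cf ε) ≤ Real.log (sSup _) := Real.log_le_log (hCfpos ε hε.le) h1
              _ = projDist (Matrix.vecMul (xv ε) M) (Matrix.vecMul (yv ε) M) := rfl
          calc Real.log (Cf ε) / Real.log d
              ≤ projDist (Matrix.vecMul (xv ε) M) (Matrix.vecMul (yv ε) M) / Real.log d := by
                exact div_le_div_of_nonneg_right hsup' hlogd.le
            _ ≤ sSup R := hle1
        have hCf0 : Cf 0 = (d + a)/(1 + d*a) := by
          rw [hCf]
          rw [div_eq_div_iff (mul_pos (hden1 0 le_rfl) (hden2 0 le_rfl)).ne'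
            (by nlinarith : (0:ℝ) < 1 + d*a).ne']
          rw [hA1, hA2]
          linear_combination (M i0 l0 * M k0 l0 * (d + a) * (d - 1)) * hφprod
        have hcont : Filter.Tendsto (fun ε => Real.log (Cf ε) / Real.log d) (𝓝[>] (0:ℝ))
            (𝓝 (Real.log (Cf 0) / Real.log d)) := by
          apply Filter.Tendsto.mono_left _ nhdsWithin_le_nhds
          apply Filter.Tendsto.div_const
          have hCfc : ContinuousAt Cf 0 := by
            apply ContinuousAt.div
            · fun_prop
            · fun_prop
            · exact (mul_pos (hden1 0 le_rfl) (hden2 0 le_rfl)).ne'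
          exact ((Real.continuousAt_log (hCfpos 0 le_rfl).ne').comp hCfc).tendsto
        have hfin := le_of_tendsto hcont
          (Filter.eventually_of_mem self_mem_nhdsWithin (fun ε hε => hεbound ε hε))
        rwa [hCf0] at hfin
      -- take d → 1⁺
      have hder1 : HasDerivAt (fun s : ℝ => Real.log (s + a) - Real.log (1 + s*a)) τ 1 := by
        have h1 : HasDerivAt (fun s : ℝ => s + a) 1 1 := (hasDerivAt_id 1).add_const a
        have h2 : HasDerivAt (fun s : ℝ => 1 + s*a) a 1 := by
          simpa using (hasDerivAt_mul_const a).const_add 1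
        have hl1 := h1.log (by linarith : (1:ℝ) + a ≠ 0)
        have hl2 := h2.log (by nlinarith : (1:ℝ) + 1*a ≠ 0)
        have hcomb := hl1.sub hl2
        refine hcomb.congr_deriv ?_
        rw [hτdef, one_mul, div_sub_div_same]
      have hder2 : HasDerivAt Real.log 1 1 := by
        simpa using Real.hasDerivAt_log one_ne_zero
      have ht1 := hasDerivAt_iff_tendsto_slope.1 hder1
      have ht2 := hasDerivAt_iff_tendsto_slope.1 hder2
      have hdiv := ht1.div ht2 one_ne_zero
      rw [div_one] at hdiv
      have heq : (fun s : ℝ => slope (fun s : ℝ => Real.log (s + a) - Real.log (1 + s*a)) 1 s /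
            slope Real.log 1 s)
          =ᶠ[𝓝[>] (1:ℝ)] (fun s => Real.log ((s + a)/(1 + s*a)) / Real.log s) := by
        filter_upwards [self_mem_nhdsWithin] with s hs
        have hs1 : (1:ℝ) < s := hs
        have hsne : s - 1 ≠ 0 := by linarith
        have hsp : (0:ℝ) < s + a := by linarith
        have hgp : (0:ℝ) < 1 + s*a := by nlinarith
        rw [slope_def_field, slope_def_field, Real.log_one, sub_zero]
        have hf1 : Real.log (1 + a) - Real.log (1 + 1*a) = 0 := by norm_num
        rw [hf1, sub_zero]
        rw [div_div_div_comm, div_self hsne, div_one]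
        rw [Real.log_div hsp.ne' hgp.ne']
      have hdiv' : Filter.Tendsto (fun s => Real.log ((s + a)/(1 + s*a)) / Real.log s)
          (𝓝[>] (1:ℝ)) (𝓝 τ) :=
        Filter.Tendsto.congr' heq
          (hdiv.mono_left (nhdsWithin_mono 1 (fun s hs => ne_of_gt hs)))
      exact le_of_tendsto hdiv'
        (Filter.eventually_of_mem self_mem_nhdsWithin (fun d hd => hkey d hd))
  exact le_antisymm (csSup_le ⟨0, h0R⟩ hub) hlow
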